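/- For γ = 2 and 0 < α < 1, the Bessel–Riesz fractional derivative of the normalized Bessel function j_{1/2}(x) = sin(x)/x equals B^α_2 j_{1/2}(x) = (2^{2α} Γ(3/2 + α) Γ(1/2 + α)/(Γ(3/2) Γ(2α+2))) · sin(x)/x. -/

import Mathlib

open MeasureTheory Real

/-- Normalizing constant of the generalized translation. -/
noncomputable def Cgamma (γ : ℝ) : ℝ :=
  Real.Gamma ((γ + 1) / 2) / (Real.sqrt Real.pi * Real.Gamma (γ / 2))

/-- Generalized translation operator `^γT^y_x f(x)`. -/
noncomputable def genTranslation (γ : ℝ) (f : ℝ → ℝ) (x y : ℝ) : ℝ :=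
  Cgamma γ *
    ∫ φ in (0:ℝ)..Real.pi,
      f (Real.sqrt (x ^ 2 + y ^ 2 - 2 * x * y * Real.cos φ)) * Real.sin φ ^ (γ - 1)

/-- The normalizing constant `d_{1,γ}(α)` of the Bessel–Riesz fractional derivative. -/
noncomputable def dConst (γ α : ℝ) : ℝ :=
  Real.pi * Real.Gamma ((γ + 1) / 2) /
    ((2 : ℝ) ^ (2 * α + 1) * Real.Gamma ((1 + γ) / 2 + α) * Real.Gamma (1/2 + α)) *
    (1 / Real.sin (α * Real.pi))

open Set Filter Topology

lemma Cgamma_two : Cgamma 2 = 1/2 := by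
  have h32 : Real.Gamma (3/2) = Real.sqrt Real.pi / 2 := by
    have := Real.Gamma_add_one (s := 1/2) (by norm_num)
    rw [show (3:ℝ)/2 = 1/2 + 1 by norm_num, this, Real.Gamma_one_half_eq]; ring
  have hpi : Real.sqrt Real.pi ≠ 0 := by positivity
  simp only [Cgamma, show ((2:ℝ)+1)/2 = 3/2 by norm_num, show (2:ℝ)/2 = 1 by norm_num,
    Real.Gamma_one, h32]
  field_simp

lemma genTranslation_two_j (x t : ℝ) (hx : x ≠ 0) (ht : 0 < t) (hne : t ≠ |x|) :
    genTranslation 2 (fun s => Real.sin s / s) x t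
      = (Real.sin x / x) * (Real.sin t / t) := by
  have hq : ∀ φ : ℝ, 0 < x ^ 2 + t ^ 2 - 2 * x * t * Real.cos φ := by
    intro φ
    have h1 : 2 * x * t * Real.cos φ ≤ 2 * |x| * t := by
      have h0 : 2 * x * t * Real.cos φ ≤ |2 * x * t * Real.cos φ| := le_abs_self _
      refine h0.trans ?_
      rw [abs_mul, abs_mul, abs_mul]
      have hc := Real.abs_cos_le_one φ
      have h2 : |(2:ℝ)| * |x| * |t| * |Real.cos φ| ≤ |2| * |x| * |t| * 1 := by
        apply mul_le_mul_of_nonneg_left hc; positivity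
      calc |(2:ℝ)| * |x| * |t| * |Real.cos φ| ≤ |2| * |x| * |t| * 1 := h2
        _ = 2 * |x| * t := by rw [abs_of_pos ht, abs_two]; ring
    have h0 : (0:ℝ) < (|x| - t)^2 := by
      have : |x| - t ≠ 0 := sub_ne_zero.mpr (fun h => hne h.symm)
      positivity
    nlinarith [sq_abs x]
  -- antiderivative F φ = -cos (sqrt (q φ)) / (x*t)
  set j : ℝ → ℝ := fun s => Real.sin s / s with hj
  have key : ∀ φ ∈ Set.uIcc (0:ℝ) Real.pi,
      HasDerivAt (fun φ => -Real.cos (Real.sqrt (x^2 + t^2 - 2*x*t*Real.cos φ)) / (x*t))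
        (j (Real.sqrt (x^2 + t^2 - 2*x*t*Real.cos φ)) * Real.sin φ ^ ((2:ℝ)-1)) φ := by
    intro φ _
    have hqφ := hq φ
    have hs : 0 < Real.sqrt (x^2 + t^2 - 2*x*t*Real.cos φ) := Real.sqrt_pos.mpr hqφ
    have hd1 : HasDerivAt (fun φ : ℝ => x^2 + t^2 - 2*x*t*Real.cos φ)
        (2*x*t*Real.sin φ) φ := by
      simpa using ((Real.hasDerivAt_cos φ).const_mul (2*x*t)).const_sub (x^2+t^2)
    have hd2 : HasDerivAt (fun φ : ℝ => Real.sqrt (x^2 + t^2 - 2*x*t*Real.cos φ))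
        (2*x*t*Real.sin φ / (2 * Real.sqrt (x^2 + t^2 - 2*x*t*Real.cos φ))) φ :=
      hd1.sqrt hqφ.ne'
    have hd3 := (Real.hasDerivAt_cos _).comp φ hd2
    have hd4 := (hd3.neg).div_const (x*t)
    refine hd4.congr_deriv ?_
    have hxt : x * t ≠ 0 := mul_ne_zero hx ht.ne'
    simp only [hj, show ((2:ℝ)-1) = 1 by norm_num, Real.rpow_one]
    field_simp
  have hcont : Continuous fun φ =>
      j (Real.sqrt (x^2 + t^2 - 2*x*t*Real.cos φ)) * Real.sin φ ^ ((2:ℝ)-1) := by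
    simp only [hj, show ((2:ℝ)-1) = 1 by norm_num, Real.rpow_one]
    have hsq : Continuous fun φ : ℝ => Real.sqrt (x^2 + t^2 - 2*x*t*Real.cos φ) := by
      exact (continuous_const.sub (continuous_const.mul Real.continuous_cos)).sqrt
    have : Continuous fun φ : ℝ =>
        Real.sin (Real.sqrt (x^2 + t^2 - 2*x*t*Real.cos φ)) /
          Real.sqrt (x^2 + t^2 - 2*x*t*Real.cos φ) := by
      apply Continuous.div (Real.continuous_sin.comp hsq) hsq
      intro φ
      exact (Real.sqrt_pos.mpr (hq φ)).ne'
    exact this.mul Real.continuous_sin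
  have hint := intervalIntegral.integral_eq_sub_of_hasDerivAt key
    (hcont.intervalIntegrable 0 Real.pi)
  rw [genTranslation, Cgamma_two]
  rw [hint]
  have e0 : x^2 + t^2 - 2*x*t*Real.cos 0 = (x - t)^2 := by
    rw [Real.cos_zero]; ring
  have epi : x^2 + t^2 - 2*x*t*Real.cos Real.pi = (x + t)^2 := by
    rw [Real.cos_pi]; ring
  rw [e0, epi, Real.sqrt_sq_eq_abs, Real.sqrt_sq_eq_abs]
  rw [Real.cos_abs, Real.cos_abs]
  have : Real.cos (x - t) - Real.cos (x + t) = 2 * Real.sin x * Real.sin t := by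
    rw [Real.cos_sub, Real.cos_add]; ring
  have hxt : x * t ≠ 0 := mul_ne_zero hx ht.ne'
  field_simp
  nlinarith [this]

private noncomputable def gAux (u t : ℝ) : ℝ :=
  -(t/u + 1/u^2) * Real.exp (-(u*t)) + Real.exp (-(u*t)) * (u * Real.sin t + Real.cos t) / (1+u^2)

lemma gAux_deriv (u t : ℝ) (hu : 0 < u) :
    HasDerivAt (gAux u) ((t - Real.sin t) * Real.exp (-(u*t))) t := by
  have he : HasDerivAt (fun t : ℝ => Real.exp (-(u*t))) (-u * Real.exp (-(u*t))) t := by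
    simpa [mul_comm] using (((hasDerivAt_id t).const_mul u).neg).exp
  have h1 : HasDerivAt (fun t : ℝ => -(t/u + 1/u^2) * Real.exp (-(u*t)))
      (t * Real.exp (-(u*t))) t := by
    have ha : HasDerivAt (fun t : ℝ => -(t/u + 1/u^2)) (-(1/u)) t := by
      have := ((hasDerivAt_id' (x := t)).div_const u).add_const (1/u^2) |>.neg
      exact this
    have := ha.mul he
    refine this.congr_deriv ?_
    field_simp
    ring
  have h2 : HasDerivAt (fun t : ℝ => Real.exp (-(u*t)) * (u * Real.sin t + Real.cos t) / (1+u^2))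
      (-Real.sin t * Real.exp (-(u*t))) t := by
    have hb : HasDerivAt (fun t : ℝ => u * Real.sin t + Real.cos t)
        (u * Real.cos t + -Real.sin t) t :=
      ((Real.hasDerivAt_sin t).const_mul u).add (Real.hasDerivAt_cos t)
    have := (he.mul hb).div_const (1+u^2)
    refine this.congr_deriv ?_
    have h1u : (1:ℝ) + u^2 ≠ 0 := by positivity
    rw [div_eq_iff h1u]
    ring
  have := h1.add h2
  refine this.congr_deriv ?_
  ring

lemma exp_neg_mul_tendsto (u : ℝ) (hu : 0 < u) :
    Tendsto (fun t : ℝ => Real.exp (-(u*t))) atTop (𝓝 0) := by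
  have := tendsto_rpow_mul_exp_neg_mul_atTop_nhds_zero 0 u hu
  refine this.congr' ?_
  filter_upwards [eventually_gt_atTop (0:ℝ)] with t ht
  rw [Real.rpow_zero, one_mul, neg_mul]

lemma laplace_t_sub_sin (u : ℝ) (hu : 0 < u) :
    (∫ t in Ioi (0:ℝ), (t - Real.sin t) * Real.exp (-(u*t))) = 1/u^2 - 1/(1+u^2) ∧
    IntegrableOn (fun t => (t - Real.sin t) * Real.exp (-(u*t))) (Ioi 0) := by
  have hderiv : ∀ t ∈ Ici (0:ℝ), HasDerivAt (gAux u)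
      ((fun t => (t - Real.sin t) * Real.exp (-(u*t))) t) t := fun t _ => gAux_deriv u t hu
  have hpos : ∀ t ∈ Ioi (0:ℝ), 0 ≤ (t - Real.sin t) * Real.exp (-(u*t)) := by
    intro t ht
    have : Real.sin t ≤ t := Real.sin_le ht.le
    have := Real.exp_pos (-(u*t))
    nlinarith
  have h2 := exp_neg_mul_tendsto u hu
  have htend : Tendsto (gAux u) atTop (𝓝 0) := by
    have A : Tendsto (fun t : ℝ => -(t/u + 1/u^2) * Real.exp (-(u*t))) atTop (𝓝 0) := by
      have h1 : Tendsto (fun t : ℝ => t * Real.exp (-(u*t))) atTop (𝓝 0) := by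
        have := tendsto_rpow_mul_exp_neg_mul_atTop_nhds_zero 1 u hu
        refine this.congr' ?_
        filter_upwards [eventually_ge_atTop (0:ℝ)] with t _
        rw [Real.rpow_one, neg_mul]
      have h3 := ((h1.const_mul (-(1/u))).add (h2.const_mul (-(1/u^2))))
      rw [show -(1/u) * (0:ℝ) + -(1/u^2) * 0 = 0 by ring] at h3
      exact h3.congr (fun t => by ring)
    have B : Tendsto (fun t : ℝ => Real.exp (-(u*t)) * (u * Real.sin t + Real.cos t) / (1+u^2))
        atTop (𝓝 0) := by
      apply squeeze_zero_norm (a := fun t => Real.exp (-(u*t)) * ((u + 1) / (1+u^2)))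
      · intro t
        have h1u : (0:ℝ) < 1 + u^2 := by positivity
        rw [Real.norm_eq_abs, abs_div, abs_of_pos h1u, abs_mul, Real.abs_exp, mul_div_assoc]
        apply mul_le_mul_of_nonneg_left ?_ (Real.exp_pos _).le
        apply div_le_div_of_nonneg_right ?_ h1u.le |>.trans_eq rfl
        · have hs := Real.neg_one_le_sin t
          have hs' := Real.sin_le_one t
          have hc := Real.neg_one_le_cos t
          have hc' := Real.cos_le_one t
          rw [abs_le]
          constructor <;> nlinarith
      · simpa using h2.mul_const ((u + 1) / (1+u^2))
    have h4 := A.add B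
    rw [add_zero (0:ℝ)] at h4
    exact h4.congr fun t => rfl
  refine ⟨?_, integrableOn_Ioi_deriv_of_nonneg' hderiv hpos htend⟩
  rw [integral_Ioi_of_hasDerivAt_of_nonneg' hderiv hpos htend]
  simp only [gAux, Real.sin_zero, Real.cos_zero, mul_zero, neg_zero, Real.exp_zero]
  field_simp
  ring

lemma integrableOn_rpow_mul_exp_neg {a r : ℝ} (ha : 0 < a) (hr : 0 < r) :
    IntegrableOn (fun t : ℝ => t ^ (a-1) * Real.exp (-(r*t))) (Ioi 0) := by
  have h1 : IntegrableOn (fun x : ℝ => Real.exp (-x) * x ^ (a-1)) (Ioi 0) :=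
    Real.GammaIntegral_convergent ha
  have h2 : IntegrableOn (fun t : ℝ => Real.exp (-(r*t)) * (r*t) ^ (a-1)) (Ioi 0) := by
    have := (integrableOn_Ioi_comp_mul_left_iff
      (fun x : ℝ => Real.exp (-x) * x ^ (a-1)) 0 hr).mpr
    rw [mul_zero] at this
    exact this h1
  have h3 : IntegrableOn (fun t : ℝ => r ^ (-(a-1)) * (Real.exp (-(r*t)) * (r*t) ^ (a-1)))
      (Ioi 0) := h2.const_mul (r ^ (-(a-1)))
  refine (h3.congr_fun ?_ measurableSet_Ioi)
  intro t ht
  have ht' : (0:ℝ) < t := ht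
  dsimp only
  rw [Real.mul_rpow hr.le ht'.le, ← mul_assoc, mul_comm (r ^ (-(a-1))) (Real.exp (-(r*t))),
    mul_assoc, ← mul_assoc (r ^ (-(a-1))), ← Real.rpow_add hr]
  simp [mul_comm]

lemma integrableOn_rpow_div_one_add_sq {s : ℝ} (hs1 : -1 < s) (hs2 : s < 1) :
    IntegrableOn (fun u : ℝ => u ^ s / (1 + u^2)) (Ioi 0) := by
  have hcont : ContinuousOn (fun u : ℝ => u ^ s / (1 + u^2)) (Ioi 0) := by
    apply ContinuousOn.div
    · exact fun u hu => (Real.continuousAt_rpow_const u s (Or.inl (ne_of_gt hu))).continuousWithinAt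
    · exact (continuous_const.add (continuous_pow 2)).continuousOn
    · intro u _; positivity
  rw [show Ioi (0:ℝ) = Ioc 0 1 ∪ Ioi 1 from (Ioc_union_Ioi_eq_Ioi zero_le_one).symm]
  apply IntegrableOn.union
  · have hg : IntegrableOn (fun u : ℝ => u ^ s) (Ioc 0 1) := by
      have := intervalIntegral.intervalIntegrable_rpow' (a := 0) (b := 1) hs1
      exact (intervalIntegrable_iff_integrableOn_Ioc_of_le zero_le_one).mp this
    apply hg.mono' ((hcont.mono Ioc_subset_Ioi_self).aestronglyMeasurable measurableSet_Ioc)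
    apply (ae_restrict_iff' measurableSet_Ioc).mpr
    apply Filter.Eventually.of_forall
    intro u hu
    have hu0 : (0:ℝ) < u := hu.1
    have h1 : (0:ℝ) < 1 + u^2 := by positivity
    rw [Real.norm_eq_abs, abs_div, abs_of_nonneg (Real.rpow_nonneg hu0.le s), abs_of_pos h1]
    calc u ^ s / (1 + u^2) ≤ u ^ s / 1 := by
          apply div_le_div_of_nonneg_left (Real.rpow_nonneg hu0.le s) one_pos
          · nlinarith
      _ = u ^ s := div_one _
  · have hg : IntegrableOn (fun u : ℝ => u ^ (s-2)) (Ioi 1) :=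
      integrableOn_Ioi_rpow_of_lt (by linarith) one_pos
    apply hg.mono' ((hcont.mono (Ioi_subset_Ioi zero_le_one)).aestronglyMeasurable measurableSet_Ioi)
    apply (ae_restrict_iff' measurableSet_Ioi).mpr
    apply Filter.Eventually.of_forall
    intro u hu
    have hu1 : (1:ℝ) < u := hu
    have hu0 : (0:ℝ) < u := lt_trans one_pos hu1
    have h1 : (0:ℝ) < 1 + u^2 := by positivity
    rw [Real.norm_eq_abs, abs_div, abs_of_nonneg (Real.rpow_nonneg hu0.le s), abs_of_pos h1]
    have h2 : u ^ s / (1 + u^2) ≤ u ^ s / u^2 := by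
      apply div_le_div_of_nonneg_left (Real.rpow_nonneg hu0.le s) (by positivity)
      nlinarith
    refine h2.trans_eq ?_
    rw [show (u:ℝ)^(2:ℕ) = u ^ ((2:ℕ):ℝ) from (Real.rpow_natCast u 2).symm,
      ← Real.rpow_sub hu0]
    norm_num

lemma integral_rpow_div_one_add (α : ℝ) (hα : 0 < α) (hα' : α < 1) :
    ∫ v in Ioi (0:ℝ), v ^ (α-1) / (1 + v) = Real.Gamma α * Real.Gamma (1-α) := by
  set μ : Measure ℝ := volume.restrict (Ioi 0) with hμ
  set F : ℝ → ℝ → ℝ := fun v w => v ^ (α-1) * (Real.exp (-w) * Real.exp (-(v*w))) with hF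
  -- inner integral over w
  have hinner_w : ∀ v : ℝ, v ∈ Ioi (0:ℝ) → (∫ w, F v w ∂μ) = v ^ (α-1) / (1 + v) := by
    intro v hv
    have hv' : (0:ℝ) < v := hv
    have h1v : (0:ℝ) < 1 + v := by linarith
    have := Real.integral_rpow_mul_exp_neg_mul_Ioi (a := 1) (r := 1 + v) one_pos h1v
    have heq : ∀ w ∈ Ioi (0:ℝ), w ^ ((1:ℝ)-1) * Real.exp (-((1+v)*w))
        = Real.exp (-w) * Real.exp (-(v*w)) := by
      intro w _
      rw [sub_self, Real.rpow_zero, one_mul, ← Real.exp_add]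
      ring_nf
    rw [setIntegral_congr_fun measurableSet_Ioi heq] at this
    rw [hF]
    simp only
    rw [MeasureTheory.integral_const_mul, this, Real.Gamma_one, Real.rpow_one]
    field_simp
  -- inner integral over v
  have hinner_v : ∀ w : ℝ, w ∈ Ioi (0:ℝ) → (∫ v, F v w ∂μ)
      = Real.exp (-w) * (w ^ (-α) * Real.Gamma α) := by
    intro w hw
    have hw' : (0:ℝ) < w := hw
    have hG := Real.integral_rpow_mul_exp_neg_mul_Ioi (a := α) (r := w) hα hw'
    have heq : ∀ v ∈ Ioi (0:ℝ), F v w = Real.exp (-w) * (v ^ (α-1) * Real.exp (-(w*v))) := by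
      intro v _
      rw [hF]; simp only; rw [mul_comm v w]; ring
    rw [hμ, setIntegral_congr_fun measurableSet_Ioi heq, MeasureTheory.integral_const_mul, hG,
      one_div, Real.inv_rpow hw'.le, ← Real.rpow_neg hw'.le]
  -- measurability
  have hmeas : AEStronglyMeasurable (Function.uncurry F) (μ.prod μ) := by
    apply Measurable.aestronglyMeasurable
    apply Measurable.mul
    · exact (measurable_fst.pow_const _)
    · exact ((measurable_snd.neg.exp).mul ((measurable_fst.mul measurable_snd).neg.exp))
  -- integrability of F on product
  have hint : Integrable (Function.uncurry F) (μ.prod μ) := by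
    rw [integrable_prod_iff' hmeas]
    constructor
    · rw [hμ]
      apply (ae_restrict_iff' measurableSet_Ioi).mpr
      apply Filter.Eventually.of_forall
      intro w hw
      have hw' : (0:ℝ) < w := hw
      have h0 : IntegrableOn (fun v : ℝ => v ^ (α-1) * Real.exp (-(w*v))) (Ioi 0) :=
        integrableOn_rpow_mul_exp_neg hα hw'
      have h1 : IntegrableOn (fun v : ℝ => Real.exp (-w) * (v ^ (α-1) * Real.exp (-(w*v))))
          (Ioi 0) := h0.const_mul _
      apply h1.congr_fun ?_ measurableSet_Ioi
      intro v _
      rw [hF]; simp only [Function.uncurry]; rw [mul_comm v w]; ring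
    · -- integrable (fun w => ∫ v, ‖F v w‖ ∂μ) ∂μ
      have h0 : IntegrableOn (fun w : ℝ => w ^ ((1-α)-1) * Real.exp (-(1*w))) (Ioi 0) :=
        integrableOn_rpow_mul_exp_neg (by linarith) one_pos
      have h1 : IntegrableOn (fun w : ℝ => Real.Gamma α * (w ^ ((1-α)-1) * Real.exp (-(1*w))))
          (Ioi 0) := h0.const_mul _
      refine Integrable.congr (f := fun w : ℝ => Real.Gamma α * (w ^ ((1-α)-1) * Real.exp (-(1*w))))
        h1 ?_
      rw [hμ]
      apply (ae_restrict_iff' measurableSet_Ioi).mpr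
      apply Filter.Eventually.of_forall
      intro w hw
      have hw' : (0:ℝ) < w := hw
      have hnn : ∀ v ∈ Ioi (0:ℝ), ‖Function.uncurry F (v, w)‖ = F v w := by
        intro v hv
        have hv' : (0:ℝ) < v := hv
        rw [Function.uncurry, Real.norm_eq_abs, abs_of_nonneg]
        rw [hF]
        simp only
        positivity
      calc (fun w : ℝ => Real.Gamma α * (w ^ ((1-α)-1) * Real.exp (-(1*w)))) w
          = Real.exp (-w) * (w ^ (-α) * Real.Gamma α) := by
            dsimp only
            rw [one_mul, show (1-α)-1 = -α by ring]
            ring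
        _ = ∫ v, F v w ∂μ := (hinner_v w hw).symm
        _ = (fun y => ∫ x in Ioi (0:ℝ), ‖Function.uncurry F (x, y)‖) w := by
            dsimp only
            rw [hμ]
            exact (setIntegral_congr_fun measurableSet_Ioi hnn).symm
  -- now swap
  have hswap := MeasureTheory.integral_integral_swap (μ := μ) (ν := μ) (f := F) hint
  have lhs_eq : (∫ v, ∫ w, F v w ∂μ ∂μ) = ∫ v in Ioi (0:ℝ), v ^ (α-1) / (1 + v) := by
    rw [hμ]
    exact setIntegral_congr_fun measurableSet_Ioi (fun v hv => hinner_w v hv)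
  have rhs_eq : (∫ w, ∫ v, F v w ∂μ ∂μ) = Real.Gamma α * Real.Gamma (1-α) := by
    rw [hμ]
    have h2 : ∀ w ∈ Ioi (0:ℝ), (∫ v, F v w ∂μ)
        = Real.Gamma α * (Real.exp (-w) * w ^ ((1-α)-1)) := by
      intro w hw
      have hw' : (0:ℝ) < w := hw
      rw [hinner_v w hw]
      rw [show (1-α)-1 = -α by ring]
      ring
    rw [setIntegral_congr_fun measurableSet_Ioi h2, MeasureTheory.integral_const_mul,
      ← Real.Gamma_eq_integral (by linarith : (0:ℝ) < 1-α)]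
  rw [← lhs_eq, hswap, rhs_eq]

lemma integral_rpow_div_one_add_sq (α : ℝ) (hα : 0 < α) (hα' : α < 1) :
    ∫ u in Ioi (0:ℝ), u ^ (2*α-1) / (1 + u^2)
      = Real.Gamma α * Real.Gamma (1-α) / 2 := by
  have h := MeasureTheory.integral_comp_rpow_Ioi_of_pos
    (g := fun v : ℝ => v ^ (α-1) / (1 + v)) (p := 2) two_pos
  rw [integral_rpow_div_one_add α hα hα'] at h
  have heq : ∀ u ∈ Ioi (0:ℝ),
      ((2:ℝ) * u ^ ((2:ℝ) - 1)) • ((u ^ (2:ℝ)) ^ (α-1) / (1 + u ^ (2:ℝ)))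
        = 2 * (u ^ (2*α-1) / (1 + u^2)) := by
    intro u hu
    have hu' : (0:ℝ) < u := hu
    have h2 : u ^ (2:ℝ) = u ^ (2:ℕ) := by
      rw [← Real.rpow_natCast u 2]; norm_num
    rw [smul_eq_mul, show (2:ℝ)-1 = 1 by norm_num, Real.rpow_one,
      ← Real.rpow_mul hu'.le, h2]
    have e3 : u * u ^ (2*(α-1)) = u ^ (2*α-1) := by
      nth_rewrite 1 [← Real.rpow_one u]
      rw [← Real.rpow_add hu']
      ring_nf
    rw [mul_assoc, ← mul_div_assoc u, e3]
  rw [setIntegral_congr_fun measurableSet_Ioi heq, MeasureTheory.integral_const_mul] at h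
  linarith

lemma I_eval (α : ℝ) (hα : 0 < α) (hα' : α < 1) :
    (∫ t in Ioi (0:ℝ), (1 - Real.sin t / t) / t ^ (1 + 2*α))
      = Real.pi / (2 * Real.sin (Real.pi * α) * Real.Gamma (2*α+2)) := by
  set μ : Measure ℝ := volume.restrict (Ioi 0) with hμ
  set G : ℝ → ℝ → ℝ :=
    fun t u => (t - Real.sin t) * (u ^ ((2*α+2)-1) * Real.exp (-(t*u))) with hG
  have hΓpos : 0 < Real.Gamma (2*α+2) := Real.Gamma_pos_of_pos (by linarith)
  have ha22 : (0:ℝ) < 2*α+2 := by linarith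
  -- inner integral over u, for t > 0
  have hinner_u : ∀ t ∈ Ioi (0:ℝ), (∫ u, G t u ∂μ)
      = ((1 - Real.sin t / t) / t ^ (1 + 2*α)) * Real.Gamma (2*α+2) := by
    intro t ht
    have ht' : (0:ℝ) < t := ht
    have hint := Real.integral_rpow_mul_exp_neg_mul_Ioi (a := 2*α+2) (r := t) ha22 ht'
    rw [hG]
    simp only
    rw [hμ, MeasureTheory.integral_const_mul, hint]
    have e1 : ((1:ℝ)/t) ^ (2*α+2) = t ^ (-(2*α+2)) := by
      rw [one_div, Real.inv_rpow ht'.le, ← Real.rpow_neg ht'.le]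
    have e2 : (1 - Real.sin t / t) / t ^ (1 + 2*α) = (t - Real.sin t) * t ^ (-(2*α+2)) := by
      have e3 : (1 - Real.sin t / t) = (t - Real.sin t) / t := by field_simp
      have e4 : t * t ^ (1 + 2*α) = t ^ (2*α+2) := by
        nth_rewrite 1 [← Real.rpow_one t]
        rw [← Real.rpow_add ht']
        ring_nf
      rw [e3, div_div, e4, Real.rpow_neg ht'.le, div_eq_mul_inv]
    rw [e1, e2]
    ring
  -- inner integral over t, for u > 0
  have hinner_t : ∀ u ∈ Ioi (0:ℝ), (∫ t, G t u ∂μ)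
      = u ^ ((2*α+2)-1) * (1/u^2 - 1/(1+u^2)) := by
    intro u hu
    have hu' : (0:ℝ) < u := hu
    have heq : ∀ t ∈ Ioi (0:ℝ), G t u
        = u ^ ((2*α+2)-1) * ((t - Real.sin t) * Real.exp (-(u*t))) := by
      intro t _
      rw [hG]; simp only; rw [mul_comm t u]; ring
    rw [hμ, setIntegral_congr_fun measurableSet_Ioi heq, MeasureTheory.integral_const_mul,
      (laplace_t_sub_sin u hu').1]
  -- nonnegativity of G on the domain
  have hGnn : ∀ t ∈ Ioi (0:ℝ), ∀ u ∈ Ioi (0:ℝ), 0 ≤ G t u := by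
    intro t ht u hu
    have ht' : (0:ℝ) < t := ht
    have hu' : (0:ℝ) < u := hu
    have hs : Real.sin t ≤ t := Real.sin_le ht'.le
    rw [hG]
    have h1 : (0:ℝ) ≤ t - Real.sin t := by linarith
    have h2 : (0:ℝ) ≤ u ^ ((2*α+2)-1) * Real.exp (-(t*u)) := by positivity
    exact mul_nonneg h1 h2
  have hmeas : AEStronglyMeasurable (Function.uncurry G) (μ.prod μ) := by
    apply Measurable.aestronglyMeasurable
    apply Measurable.mul
    · exact measurable_fst.sub (Real.measurable_sin.comp measurable_fst)
    · exact (measurable_snd.pow_const _).mul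
        ((measurable_fst.mul measurable_snd).neg.exp)
  have hint : Integrable (Function.uncurry G) (μ.prod μ) := by
    rw [integrable_prod_iff' hmeas]
    constructor
    · rw [hμ]
      apply (ae_restrict_iff' measurableSet_Ioi).mpr
      apply Filter.Eventually.of_forall
      intro u hu
      have hu' : (0:ℝ) < u := hu
      have h0 := (laplace_t_sub_sin u hu').2
      have h1 : IntegrableOn
          (fun t : ℝ => u ^ ((2*α+2)-1) * ((t - Real.sin t) * Real.exp (-(u*t))))
          (Ioi 0) := h0.const_mul _
      apply h1.congr_fun ?_ measurableSet_Ioi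
      intro t _
      rw [hG]; simp only [Function.uncurry]; rw [mul_comm u t]; ring
    · have hH2 := integrableOn_rpow_div_one_add_sq
        (s := 2*α-1) (by linarith) (by linarith)
      refine Integrable.congr (f := fun u : ℝ => u ^ (2*α-1) / (1 + u^2)) ?_ ?_
      · rw [hμ]; exact hH2
      · rw [hμ]
        apply (ae_restrict_iff' measurableSet_Ioi).mpr
        apply Filter.Eventually.of_forall
        intro u hu
        have hu' : (0:ℝ) < u := hu
        have hnn : ∀ t ∈ Ioi (0:ℝ), ‖Function.uncurry G (t, u)‖ = G t u := by
          intro t ht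
          rw [Function.uncurry, Real.norm_eq_abs, abs_of_nonneg (hGnn t ht u hu)]
        calc (fun u : ℝ => u ^ (2*α-1) / (1 + u^2)) u
            = u ^ ((2*α+2)-1) * (1/u^2 - 1/(1+u^2)) := by
              dsimp only
              have hu2 : (0:ℝ) < 1 + u^2 := by positivity
              have e5 : u ^ ((2*α+2)-1) = u ^ (2*α-1) * u^2 := by
                rw [← Real.rpow_natCast u 2, ← Real.rpow_add hu']
                norm_num
                ring_nf
              rw [e5]
              field_simp
              ring
          _ = ∫ t, G t u ∂μ := (hinner_t u hu).symm
          _ = (fun y => ∫ x in Ioi (0:ℝ), ‖Function.uncurry G (x, y)‖) u := by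
              dsimp only
              rw [hμ]
              exact (setIntegral_congr_fun measurableSet_Ioi hnn).symm
  have hswap := MeasureTheory.integral_integral_swap (μ := μ) (ν := μ) (f := G) hint
  have lhs_eq : (∫ t, ∫ u, G t u ∂μ ∂μ)
      = (∫ t in Ioi (0:ℝ), (1 - Real.sin t / t) / t ^ (1 + 2*α)) * Real.Gamma (2*α+2) := by
    rw [hμ, setIntegral_congr_fun measurableSet_Ioi
      (fun t ht => by rw [← hμ, hinner_u t ht])]
    rw [MeasureTheory.integral_mul_const]
  have rhs_eq : (∫ u, ∫ t, G t u ∂μ ∂μ) = Real.Gamma α * Real.Gamma (1-α) / 2 := by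
    have heq2 : ∀ u ∈ Ioi (0:ℝ), (∫ t, G t u ∂μ) = u ^ (2*α-1) / (1 + u^2) := by
      intro u hu
      have hu' : (0:ℝ) < u := hu
      rw [hinner_t u hu]
      have e5 : u ^ ((2*α+2)-1) = u ^ (2*α-1) * u^2 := by
        rw [← Real.rpow_natCast u 2, ← Real.rpow_add hu']
        norm_num
        ring_nf
      have hu2 : (0:ℝ) < 1 + u^2 := by positivity
      rw [e5]
      field_simp
      ring
    rw [hμ, setIntegral_congr_fun measurableSet_Ioi (fun u hu => by rw [← hμ, heq2 u hu])]
    exact integral_rpow_div_one_add_sq α hα hα'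
  have hfinal := lhs_eq.symm.trans (hswap.trans rhs_eq)
  have hrefl := Real.Gamma_mul_Gamma_one_sub α
  have hsin : Real.sin (Real.pi * α) ≠ 0 := by
    have h1 : (0:ℝ) < Real.pi * α := by positivity
    have h2 : Real.pi * α < Real.pi := by
      nth_rewrite 2 [← mul_one Real.pi]
      exact mul_lt_mul_of_pos_left hα' Real.pi_pos
    exact (Real.sin_pos_of_pos_of_lt_pi h1 h2).ne'
  rw [hrefl] at hfinal
  field_simp at hfinal ⊢
  linarith

theorem besselRiesz_deriv_j_half (α : ℝ) (hα : 0 < α) (hα' : α < 1) (x : ℝ) (hx : x ≠ 0) :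
    (1 / dConst 2 α) *
        ∫ t in Set.Ioi (0:ℝ),
          (Real.sin x / x - genTranslation 2 (fun s => Real.sin s / s) x t) /
            t ^ (1 + 2 * α) =
      (2 : ℝ) ^ (2 * α) * Real.Gamma (3/2 + α) * Real.Gamma (1/2 + α) /
          (Real.Gamma (3/2) * Real.Gamma (2 * α + 2)) * (Real.sin x / x) := by
  have hae : ∀ᵐ t : ℝ ∂(volume : Measure ℝ), t ≠ |x| := by
    have hset : {a : ℝ | ¬ a ≠ |x|} = {|x|} := by ext a; simp
    rw [ae_iff, hset]
    exact measure_singleton _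
  have hstep : (∫ t in Set.Ioi (0:ℝ),
      (Real.sin x / x - genTranslation 2 (fun s => Real.sin s / s) x t) / t ^ (1 + 2 * α))
      = (Real.sin x / x) * ∫ t in Set.Ioi (0:ℝ), (1 - Real.sin t / t) / t ^ (1 + 2*α) := by
    rw [← MeasureTheory.integral_const_mul]
    apply MeasureTheory.setIntegral_congr_ae measurableSet_Ioi
    filter_upwards [hae] with t hne ht
    have ht' : (0:ℝ) < t := ht
    rw [genTranslation_two_j x t hx ht' hne]
    ring
  rw [hstep, I_eval α hα hα']
  -- scalar algebra
  have h32 : ((2:ℝ) + 1)/2 = 3/2 := by norm_num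
  have h32' : ((1:ℝ) + 2)/2 + α = 3/2 + α := by norm_num
  have hd : dConst 2 α = Real.pi * Real.Gamma (3/2) /
      ((2 : ℝ) ^ (2 * α + 1) * Real.Gamma (3/2 + α) * Real.Gamma (1/2 + α)) *
      (1 / Real.sin (α * Real.pi)) := by
    rw [dConst, h32, h32']
  have hsin : 0 < Real.sin (α * Real.pi) := by
    apply Real.sin_pos_of_pos_of_lt_pi (by positivity)
    nth_rewrite 2 [← one_mul Real.pi]
    exact mul_lt_mul_of_pos_right hα' Real.pi_pos
  have hsin2 : Real.sin (Real.pi * α) = Real.sin (α * Real.pi) := by rw [mul_comm]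
  have hΓ1 : 0 < Real.Gamma (3/2) := Real.Gamma_pos_of_pos (by norm_num)
  have hΓ2 : 0 < Real.Gamma (3/2 + α) := Real.Gamma_pos_of_pos (by linarith)
  have hΓ3 : 0 < Real.Gamma (1/2 + α) := Real.Gamma_pos_of_pos (by linarith)
  have hΓ4 : 0 < Real.Gamma (2*α + 2) := Real.Gamma_pos_of_pos (by linarith)
  have hp1 : (0:ℝ) < (2:ℝ) ^ (2*α) := Real.rpow_pos_of_pos two_pos _
  have hpow : (2:ℝ) ^ (2*α + 1) = (2:ℝ) ^ (2*α) * 2 := by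
    rw [Real.rpow_add two_pos, Real.rpow_one]
  have hπ : (0:ℝ) < Real.pi := Real.pi_pos
  rw [hd, hsin2, hpow]
  rw [show (2:ℝ)*α + 2 = 2*α+2 from rfl]
  field_simp
  ring
  rw [mul_comm, ← mul_assoc, inv_mul_cancel₀ (hsin2 ▸ hsin.ne'), one_mul]
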